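/- Let ρ0 be a density matrix on a Hilbert space of finite dimension n, let H be a Hermitian Hamiltonian, ħ > 0, and let ρ(t) = exp(−iHt/ħ) ρ0 exp(iHt/ħ). Then for every t ≥ 0 the Bures distance from the initial state grows at most linearly with rate ΔE_{ρ0}/ħ: √(2 − 2F(ρ0, ρ(t))) ≤ t·ΔE_{ρ0}/ħ, where ΔE_{ρ0} = √(tr(H²ρ0) − tr(Hρ0)²). (This is the Mandelstam–Tamm quantum speed limit: the state cannot leave the ε-Bures-ball around ρ0 before time ε·ħ/ΔE_{ρ0}.) -/

import Mathlib

open Matrix MeasureTheory Real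
open scoped Classical ComplexOrder
open scoped MatrixOrder

/-- The positive semidefinite square root of a matrix (junk value `0` if the matrix is not
positive semidefinite). -/
noncomputable def matSqrt {n : ℕ} (A : Matrix (Fin n) (Fin n) ℂ) : Matrix (Fin n) (Fin n) ℂ :=
  if h : A.PosSemidef then CFC.sqrt A else 0

/-- The unitary time evolution `exp(-iHt/h) A exp(iHt/h)`. -/
noncomputable def evol {n : ℕ} (ℏ : ℝ) (H A : Matrix (Fin n) (Fin n) ℂ) (t : ℝ) :
    Matrix (Fin n) (Fin n) ℂ :=
  NormedSpace.exp ((-(Complex.I * t / ℏ)) • H) * A * NormedSpace.exp ((Complex.I * t / ℏ) • H)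

/-- The fidelity `F(ρ,σ) = tr √(√ρ σ √ρ)` of two density matrices. -/
noncomputable def fidelity {n : ℕ} (ρ σ : Matrix (Fin n) (Fin n) ℂ) : ℝ :=
  ((matSqrt (matSqrt ρ * σ * matSqrt ρ)).trace).re

/-- Diagonal entries of a PSD matrix are real and nonnegative. -/
lemma MT.psd_diag {n : ℕ} (ρ : Matrix (Fin n) (Fin n) ℂ) (h : ρ.PosSemidef) (j : Fin n) :
    ρ j j = ((ρ j j).re : ℂ) ∧ 0 ≤ (ρ j j).re := by
  have h2 := h.diag_nonneg (i := j)
  rw [Complex.nonneg_iff] at h2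
  exact ⟨by rw [Complex.ext_iff]; simp [h2.2.symm], h2.1⟩

lemma MT.conj_diag {n : ℕ} {A : Matrix (Fin n) (Fin n) ℂ} (hA : A.IsHermitian) :
    star (hA.eigenvectorUnitary : Matrix (Fin n) (Fin n) ℂ) * A *
      (hA.eigenvectorUnitary : Matrix (Fin n) (Fin n) ℂ) = diagonal (RCLike.ofReal ∘ hA.eigenvalues) := by
  have hs := hA.spectral_theorem
  rw [Unitary.conjStarAlgAut_apply] at hs
  set U : Matrix (Fin n) (Fin n) ℂ := (hA.eigenvectorUnitary : Matrix (Fin n) (Fin n) ℂ) with hUdef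
  have hU : star U * U = 1 := Unitary.coe_star_mul_self _
  calc star U * A * U = star U * (U * diagonal (RCLike.ofReal ∘ hA.eigenvalues) * star U) * U := by
        rw [← hs]
    _ = diagonal (RCLike.ofReal ∘ hA.eigenvalues) := by
        simp only [mul_assoc, hU, mul_one]
        rw [← mul_assoc, hU, one_mul]

/-- `Re tr M ≤ tr √(M Mᴴ)` (i.e. the real part of the trace is at most the trace norm). -/
lemma MT.traceRe_le {n : ℕ} (M : Matrix (Fin n) (Fin n) ℂ) :
    (M.trace).re ≤ ((matSqrt (M * Mᴴ)).trace).re := by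
  have hP : (M * Mᴴ).PosSemidef := posSemidef_self_mul_conjTranspose M
  rw [matSqrt, dif_pos hP]
  set V : Matrix (Fin n) (Fin n) ℂ := (hP.1.eigenvectorUnitary : Matrix (Fin n) (Fin n) ℂ)
    with hVdef
  have hV : V ∈ Matrix.unitaryGroup (Fin n) ℂ := hP.1.eigenvectorUnitary.2
  set lam := hP.1.eigenvalues with hlam
  set N : Matrix (Fin n) (Fin n) ℂ := star V * M * V with hN
  have htrN : N.trace = M.trace := by
    rw [hN, trace_mul_cycle, Matrix.mem_unitaryGroup_iff.mp hV, one_mul]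
  have hNN : N * Nᴴ = diagonal (RCLike.ofReal ∘ lam) := by
    have := MT.conj_diag hP.1
    rw [hN]
    have hVV : V * star V = 1 := Matrix.mem_unitaryGroup_iff.mp hV
    have hcancel : ∀ X : Matrix (Fin n) (Fin n) ℂ, V * (star V * X) = X := by
      intro X; rw [← mul_assoc, hVV, one_mul]
    calc (star V * M * V) * (star V * M * V)ᴴ
        = star V * (M * Mᴴ) * V := by
          simp only [conjTranspose_mul, ← star_eq_conjTranspose, StarMul.star_mul, star_star,
            mul_assoc, hcancel]
      _ = diagonal (RCLike.ofReal ∘ lam) := by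
          rw [← hVdef] at this; exact this
  have hsq : (CFC.sqrt (M * Mᴴ)).trace = ∑ i, (Real.sqrt (lam i) : ℂ) := by
    rw [CFC.sqrt_eq_real_sqrt _ hP.nonneg, cfcₙ_eq_cfc (hf0 := Real.sqrt_zero), hP.1.cfc_eq,
      Matrix.IsHermitian.cfc, Unitary.conjStarAlgAut_apply, trace_mul_cycle, ← hVdef,
      Matrix.mem_unitaryGroup_iff'.mp hV, one_mul, trace_diagonal]
    rfl
  have habs : ∀ i, ‖N i i‖ ≤ Real.sqrt (lam i) := by
    intro i
    have h1 : (‖N i i‖)^2 ≤ lam i := by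
      have h2 : ((N * Nᴴ) i i) = ∑ k, Complex.normSq (N i k) := by
        simp [Matrix.mul_apply, conjTranspose_apply, Complex.mul_conj]
      have h3 : ((N * Nᴴ) i i) = (lam i : ℂ) := by rw [hNN]; simp
      have h5 : lam i = ∑ k, Complex.normSq (N i k) := by
        have h4 : (lam i : ℂ) = ∑ k, (Complex.normSq (N i k) : ℂ) := by
          rw [← h3, h2]; push_cast; rfl
        exact_mod_cast h4
      rw [h5, Complex.sq_norm]
      exact Finset.single_le_sum (fun k _ => Complex.normSq_nonneg _) (Finset.mem_univ i)
    have := Real.sqrt_le_sqrt h1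
    rwa [Real.sqrt_sq (norm_nonneg _)] at this
  calc (M.trace).re = (N.trace).re := by rw [htrN]
    _ = ∑ i, (N i i).re := by rw [Matrix.trace]; simp [Matrix.diag]
    _ ≤ ∑ i, Real.sqrt (lam i) := by
        refine Finset.sum_le_sum fun i _ => (Complex.re_le_norm _).trans (habs i)
    _ = ((CFC.sqrt (M * Mᴴ)).trace).re := by rw [hsq]; simp

lemma MT.exp_smul_one {n : ℕ} (c : ℂ) :
    NormedSpace.exp (c • (1 : Matrix (Fin n) (Fin n) ℂ)) = Complex.exp c • 1 := by
  rw [← diagonal_one, ← diagonal_smul, Matrix.exp_diagonal]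
  ext i j
  simp [Pi.exp_def, ← Complex.exp_eq_exp_ℂ, diagonal_apply, Matrix.one_apply]

theorem mandelstam_tamm_bures_speed_limit {n : ℕ} (ℏ : ℝ) (hℏ : 0 < ℏ)
    (H ρ0 : Matrix (Fin n) (Fin n) ℂ)
    (hH : H.IsHermitian) (hρ0 : ρ0.PosSemidef) (htr : ρ0.trace = 1)
    (ΔE : ℝ) (hΔE : ΔE = Real.sqrt (((H * H * ρ0).trace).re - (((H * ρ0).trace).re) ^ 2)) :
    ∀ t : ℝ, 0 ≤ t →
      Real.sqrt (2 - 2 * fidelity ρ0 (evol ℏ H ρ0 t)) ≤ t * ΔE / ℏ := by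
  intro t ht
  set E : ℝ := ((H * ρ0).trace).re with hEdef
  -- the expectation value of H is real
  have hHtr : (H * ρ0).trace = (E : ℂ) := by
    have : (starRingEnd ℂ) ((H * ρ0).trace) = (H * ρ0).trace := by
      show star ((H * ρ0).trace) = (H * ρ0).trace
      rw [← Matrix.trace_conjTranspose, conjTranspose_mul, hH.eq, hρ0.1.eq, trace_mul_comm]
    exact (Complex.conj_eq_iff_re.mp this).symm
  set G : Matrix (Fin n) (Fin n) ℂ := H - (E : ℂ) • 1 with hGdef
  have hG : G.IsHermitian := by
    refine hH.sub ?_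
    unfold Matrix.IsHermitian
    rw [conjTranspose_smul, conjTranspose_one]
    simp
  set V : Matrix (Fin n) (Fin n) ℂ := (hG.eigenvectorUnitary : Matrix (Fin n) (Fin n) ℂ)
    with hVdef
  have hV : V ∈ Matrix.unitaryGroup (Fin n) ℂ := hG.eigenvectorUnitary.2
  have hVV : V * star V = 1 := Matrix.mem_unitaryGroup_iff.mp hV
  have hVV' : star V * V = 1 := Matrix.mem_unitaryGroup_iff'.mp hV
  set lam := hG.eigenvalues with hlam
  have hspec : G = V * diagonal (fun j => (lam j : ℂ)) * star V := by
    have := hG.spectral_theorem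
    rw [Unitary.conjStarAlgAut_apply, ← hVdef] at this
    exact this
  set ρ' : Matrix (Fin n) (Fin n) ℂ := star V * ρ0 * V with hρ'def
  have hρ' : ρ'.PosSemidef := by
    have := hρ0.conjTranspose_mul_mul_same V
    rwa [← star_eq_conjTranspose] at this
  set p : Fin n → ℝ := fun j => (ρ' j j).re with hpdef
  have hpre : ∀ j, ρ' j j = (p j : ℂ) := fun j => (MT.psd_diag ρ' hρ' j).1
  have hp0 : ∀ j, 0 ≤ p j := fun j => (MT.psd_diag ρ' hρ' j).2
  have hpsum : ∑ j, p j = 1 := by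
    have h1 : ρ'.trace = 1 := by
      rw [hρ'def, trace_mul_cycle, hVV, one_mul, htr]
    have h2 : ρ'.trace = (↑(∑ j, p j) : ℂ) := by
      rw [Matrix.trace]
      push_cast
      exact Finset.sum_congr rfl fun j _ => hpre j
    rw [h1] at h2
    exact_mod_cast h2.symm
  -- the units version of V for exp conjugation
  set Vu : (Matrix (Fin n) (Fin n) ℂ)ˣ := ⟨V, star V, hVV, hVV'⟩ with hVu
  have hexpG : ∀ c : ℂ, NormedSpace.exp (c • G) =
      V * diagonal (fun j => Complex.exp (c * lam j)) * star V := by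
    intro c
    have h1 : c • G = Vu * (diagonal (fun j => c * (lam j : ℂ))) * (Vu⁻¹ : _ˣ) := by
      rw [hspec]
      show c • (V * diagonal (fun j => (lam j : ℂ)) * star V)
        = V * diagonal (fun j => c * (lam j : ℂ)) * star V
      have hd : (fun j => c * (lam j : ℂ)) = c • fun j => (lam j : ℂ) := rfl
      rw [hd, diagonal_smul, mul_smul_comm, smul_mul_assoc]
    rw [h1, Matrix.exp_units_conj, Matrix.exp_diagonal]
    show (Vu : Matrix (Fin n) (Fin n) ℂ) * _ * ((Vu⁻¹ : _ˣ) : Matrix (Fin n) (Fin n) ℂ) = _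
    congr 2
    funext j
    simp [Pi.exp_def, ← Complex.exp_eq_exp_ℂ]
  -- relation between exp of H and exp of G
  have hexpH : ∀ c : ℂ, NormedSpace.exp (c • H) =
      Complex.exp (c * E) • NormedSpace.exp (c • G) := by
    intro c
    have h1 : c • H = c • G + (c * E) • (1 : Matrix (Fin n) (Fin n) ℂ) := by
      rw [hGdef, smul_sub]
      rw [smul_smul]
      abel
    rw [h1, Matrix.exp_add_of_commute, MT.exp_smul_one]
    · rw [mul_smul_comm, mul_one]
    · exact Commute.smul_right (Commute.smul_left (Commute.one_right G) c) (c * E)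
  -- now the main computation
  set c : ℂ := -(Complex.I * t / ℏ) with hcdef
  have hcconj : star c = -c := by
    rw [hcdef]
    simp only [star_neg, star_div₀, star_mul', Complex.star_def, Complex.conj_I,
      Complex.conj_ofReal]
    ring
  set A : Matrix (Fin n) (Fin n) ℂ := CFC.sqrt ρ0 with hAdef
  have hA : matSqrt ρ0 = A := dif_pos hρ0
  have hAH : Aᴴ = A := (CFC.sqrt_nonneg ρ0).posSemidef.1
  have hAA : A * A = ρ0 := CFC.sqrt_mul_sqrt_self ρ0 hρ0.nonneg
  set σ : Matrix (Fin n) (Fin n) ℂ := evol ℏ H ρ0 t with hσdef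
  -- the evolved state in terms of G
  have hσG : σ = NormedSpace.exp (c • G) * ρ0 * NormedSpace.exp ((-c) • G) := by
    rw [hσdef, evol]
    have h2 : (Complex.I * ↑t / ↑ℏ) • H = (-c) • H := by rw [hcdef, neg_neg]
    rw [h2, ← hcdef, hexpH c, hexpH (-c)]
    rw [smul_mul_assoc, smul_mul_assoc, mul_smul_comm, smul_smul]
    rw [← Complex.exp_add]
    have h3 : c * ↑E + -c * ↑E = 0 := by ring
    rw [h3, Complex.exp_zero, one_smul]
  set M' : Matrix (Fin n) (Fin n) ℂ := A * NormedSpace.exp (c • G) * A with hM'def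
  have hMH : M'ᴴ = A * NormedSpace.exp ((-c) • G) * A := by
    rw [hM'def, conjTranspose_mul, conjTranspose_mul, hAH, ← Matrix.exp_conjTranspose,
      conjTranspose_smul, hG.eq, hcconj, mul_assoc]
  have hMM : matSqrt ρ0 * σ * matSqrt ρ0 = M' * M'ᴴ := by
    rw [hA, hσG, hM'def, hMH]
    have h4 : ∀ X Y : Matrix (Fin n) (Fin n) ℂ,
        A * X * A * (A * Y * A) = A * (X * ρ0 * Y) * A := by
      intro X Y
      calc A * X * A * (A * Y * A) = A * (X * ((A * A) * (Y * A))) := by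
            simp only [mul_assoc]
        _ = A * (X * ρ0 * Y) * A := by rw [hAA]; simp only [mul_assoc]
    rw [h4]
  have hlow : (M'.trace).re ≤ fidelity ρ0 σ := by
    rw [fidelity, hMM]
    exact MT.traceRe_le M'
  -- compute the trace of M'
  have htrM' : M'.trace = ∑ j, Complex.exp (c * lam j) * (p j : ℂ) := by
    rw [hM'def, trace_mul_cycle, hAA, trace_mul_comm, hexpG c]
    calc (V * diagonal (fun j => Complex.exp (c * ↑(lam j))) * star V * ρ0).trace
        = (V * (diagonal (fun j => Complex.exp (c * ↑(lam j))) * (star V * ρ0))).trace := by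
          simp only [mul_assoc]
      _ = ((diagonal (fun j => Complex.exp (c * ↑(lam j))) * (star V * ρ0)) * V).trace :=
          trace_mul_comm _ _
      _ = (diagonal (fun j => Complex.exp (c * ↑(lam j))) * ρ').trace := by
          rw [hρ'def]; simp only [mul_assoc]
      _ = ∑ j, Complex.exp (c * ↑(lam j)) * ρ' j j := by
          simp [Matrix.trace, Matrix.diag, Matrix.mul_apply, diagonal_apply]
      _ = ∑ j, Complex.exp (c * ↑(lam j)) * (p j : ℂ) := by
          exact Finset.sum_congr rfl fun j _ => by rw [hpre j]
  have hre : (M'.trace).re = ∑ j, p j * Real.cos (t * lam j / ℏ) := by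
    rw [htrM', Complex.re_sum]
    refine Finset.sum_congr rfl fun j _ => ?_
    have h5 : c * (lam j : ℂ) = ((-(t * lam j / ℏ) : ℝ) : ℂ) * Complex.I := by
      rw [hcdef]; push_cast; ring
    rw [h5]
    rw [Complex.mul_re, Complex.exp_ofReal_mul_I_re]
    simp [Real.cos_neg, mul_comm]
  -- the quadratic bound
  set S : ℝ := ∑ j, p j * (lam j)^2 with hSdef
  have hkey : 2 - 2 * fidelity ρ0 σ ≤ (t / ℏ)^2 * S := by
    have h6 : 2 - 2 * fidelity ρ0 σ ≤ 2 - 2 * ∑ j, p j * Real.cos (t * lam j / ℏ) := by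
      have := hlow; rw [hre] at this; linarith
    have h7 : 2 - 2 * ∑ j, p j * Real.cos (t * lam j / ℏ)
        = ∑ j, p j * (2 - 2 * Real.cos (t * lam j / ℏ)) := by
      have e1 : ∑ j, p j * 2 = 2 := by rw [← Finset.sum_mul, hpsum, one_mul]
      have e2 : ∑ j, p j * (2 * Real.cos (t * lam j / ℏ))
          = 2 * ∑ j, p j * Real.cos (t * lam j / ℏ) := by
        rw [Finset.mul_sum]; exact Finset.sum_congr rfl fun j _ => by ring
      simp only [mul_sub]
      rw [Finset.sum_sub_distrib, e1, e2]
    have h8 : ∑ j, p j * (2 - 2 * Real.cos (t * lam j / ℏ)) ≤ ∑ j, p j * (t * lam j / ℏ)^2 := by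
      refine Finset.sum_le_sum fun j _ => ?_
      refine mul_le_mul_of_nonneg_left ?_ (hp0 j)
      have := Real.one_sub_sq_div_two_le_cos (x := t * lam j / ℏ)
      nlinarith [this]
    have h9 : ∑ j, p j * (t * lam j / ℏ)^2 = (t/ℏ)^2 * S := by
      rw [hSdef, Finset.mul_sum]
      refine Finset.sum_congr rfl fun j _ => ?_
      field_simp
    linarith [h6, h7 ▸ h8, h9 ▸ le_refl ((t/ℏ)^2*S)]
  -- the variance identity
  have hS : ((H * H * ρ0).trace).re - E^2 = S := by
    have hGG : G * G = V * diagonal (fun j => ((lam j : ℂ))^2) * star V := by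
      rw [hspec]
      calc (V * diagonal (fun j => (lam j : ℂ)) * star V)
            * (V * diagonal (fun j => (lam j : ℂ)) * star V)
          = V * (diagonal (fun j => (lam j : ℂ)) * (star V * V)
              * diagonal (fun j => (lam j : ℂ))) * star V := by
            simp only [mul_assoc]
        _ = V * (diagonal (fun j => (lam j : ℂ)) * diagonal (fun j => (lam j : ℂ))) * star V := by
            rw [hVV', mul_one]
        _ = V * diagonal (fun j => ((lam j : ℂ))^2) * star V := by
            rw [diagonal_mul_diagonal]
            congr 1
            congr 1
            funext j
            ring
    have h10 : (G * G * ρ0).trace = ∑ j, ((lam j : ℂ))^2 * (p j : ℂ) := by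
      rw [hGG]
      calc (V * diagonal (fun j => ((lam j : ℂ))^2) * star V * ρ0).trace
          = (V * (diagonal (fun j => ((lam j : ℂ))^2) * (star V * ρ0))).trace := by
            simp only [mul_assoc]
        _ = ((diagonal (fun j => ((lam j : ℂ))^2) * (star V * ρ0)) * V).trace :=
            trace_mul_comm _ _
        _ = (diagonal (fun j => ((lam j : ℂ))^2) * ρ').trace := by
            rw [hρ'def]; simp only [mul_assoc]
        _ = ∑ j, ((lam j : ℂ))^2 * ρ' j j := by
            simp [Matrix.trace, Matrix.diag, Matrix.mul_apply, diagonal_apply]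
        _ = ∑ j, ((lam j : ℂ))^2 * (p j : ℂ) :=
            Finset.sum_congr rfl fun j _ => by rw [hpre j]
    have h11 : (G * G * ρ0).trace = (H * H * ρ0).trace - (E : ℂ)^2 := by
      have hgg2 : G * G * ρ0 = H * H * ρ0 - (E : ℂ) • (H * ρ0) - (E : ℂ) • (H * ρ0)
          + ((E : ℂ) * (E : ℂ)) • ρ0 := by
        rw [hGdef]
        simp only [sub_mul, mul_sub, smul_mul_assoc, mul_smul_comm, one_mul, mul_one,
          smul_sub, smul_add, smul_smul]
        module
      rw [hgg2]
      simp only [trace_add, trace_sub, trace_smul, hHtr, htr, smul_eq_mul, mul_one]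
      ring
    have h12 : ((G * G * ρ0).trace).re = S := by
      rw [h10, hSdef, Complex.re_sum]
      refine Finset.sum_congr rfl fun j _ => ?_
      have : ((lam j : ℂ))^2 * (p j : ℂ) = ((lam j ^ 2 * p j : ℝ) : ℂ) := by push_cast; ring
      rw [this, Complex.ofReal_re]
      ring
    rw [← h12, h11]
    simp [Complex.sub_re, ← Complex.ofReal_pow]
  have hSnn : 0 ≤ S := Finset.sum_nonneg fun j _ => mul_nonneg (hp0 j) (sq_nonneg _)
  have hΔE' : ΔE = Real.sqrt S := by rw [hΔE, hS]
  calc Real.sqrt (2 - 2 * fidelity ρ0 σ) ≤ Real.sqrt ((t/ℏ)^2 * S) := Real.sqrt_le_sqrt hkey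
    _ = (t/ℏ) * Real.sqrt S := by
        rw [Real.sqrt_mul (sq_nonneg _), Real.sqrt_sq (div_nonneg ht hℏ.le)]
    _ = t * ΔE / ℏ := by rw [hΔE']; ring
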